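/- Let G be a finite connected graph and let M, H, H' be maximally intersecting matchings in G. Then every end-edge of a maximal M-H alternating path is an end-edge of a maximal H-H' alternating path with an even number of edges. -/

import Mathlib

variable {V : Type*}

/-- A matching of `G`, given as a set of edges: a set of edges of `G` that are
pairwise non-adjacent (no two distinct edges share a vertex). -/
def IsMatchingSet (G : SimpleGraph V) (M : Set (Sym2 V)) : Prop :=
  M ⊆ G.edgeSet ∧ ∀ e ∈ M, ∀ f ∈ M, e ≠ f → ∀ v : V, ¬(v ∈ e ∧ v ∈ f)

/-- ν(G): the maximum size of a matching of `G`. -/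
noncomputable def matchingNumber (G : SimpleGraph V) : ℕ :=
  sSup {n | ∃ M : Set (Sym2 V), IsMatchingSet G M ∧ M.ncard = n}

/-- λ(G): the maximum of |H| + |H'| over pairs (H, H') of disjoint matchings of `G`. -/
noncomputable def lambdaParam (G : SimpleGraph V) : ℕ :=
  sSup {n | ∃ H H' : Set (Sym2 V), IsMatchingSet G H ∧ IsMatchingSet G H' ∧
    Disjoint H H' ∧ H.ncard + H'.ncard = n}

/-- μ(G): the maximum of |H| over pairs (H, H') of disjoint matchings of `G` with
|H| + |H'| = λ(G). -/
noncomputable def muParam (G : SimpleGraph V) : ℕ :=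
  sSup {n | ∃ H H' : Set (Sym2 V), IsMatchingSet G H ∧ IsMatchingSet G H' ∧
    Disjoint H H' ∧ H.ncard + H'.ncard = lambdaParam G ∧ H.ncard = n}

/-- A list of edges alternately lies in `A ∖ B` and `B ∖ A`. -/
def AltList (A B : Set (Sym2 V)) (l : List (Sym2 V)) : Prop :=
  (∀ e ∈ l, (e ∈ A ∧ e ∉ B) ∨ (e ∈ B ∧ e ∉ A)) ∧
  List.Chain' (fun e f => ¬(e ∈ A ↔ f ∈ A)) l

/-- An `A`-`B` alternating path in `G`: a (nontrivial) path whose edges alternately lie in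
`A ∖ B` and `B ∖ A`. -/
def IsAltPath (G : SimpleGraph V) (A B : Set (Sym2 V)) {u v : V} (p : G.Walk u v) : Prop :=
  0 < p.length ∧ p.IsPath ∧ AltList A B p.edges

/-- A maximal `A`-`B` alternating path: an alternating path that cannot be extended to a
longer alternating path at either of its ends. -/
def IsMaxAltPath (G : SimpleGraph V) (A B : Set (Sym2 V)) {u v : V} (p : G.Walk u v) : Prop :=
  IsAltPath G A B p ∧
  (∀ w, ∀ h : G.Adj w u, ¬ IsAltPath G A B (SimpleGraph.Walk.cons h p)) ∧
  (∀ w, ∀ h : G.Adj w v, ¬ IsAltPath G A B (SimpleGraph.Walk.cons h p.reverse))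

/-- `M` is a maximum matching of `G`. -/
def IsMaxMatching (G : SimpleGraph V) (M : Set (Sym2 V)) : Prop :=
  IsMatchingSet G M ∧ ∀ M' : Set (Sym2 V), IsMatchingSet G M' → M'.ncard ≤ M.ncard

/-- `(H, H')` is a pair of disjoint matchings of `G` with `|H| + |H'| = λ(G)` and
`|H| = μ(G)`. -/
def IsLambdaMuPair (G : SimpleGraph V) (H H' : Set (Sym2 V)) : Prop :=
  IsMatchingSet G H ∧ IsMatchingSet G H' ∧ Disjoint H H' ∧
  H.ncard + H'.ncard = lambdaParam G ∧ H.ncard = muParam G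

/-- The matchings `M`, `H`, `H'` are maximally intersecting:
(i) `M` is a maximum matching; (ii) `(H, H') ∈ Λ(G)` with `|H| = μ(G)`;
(iii) `|M ∩ (H ∪ H')|` is maximum among all such triples;
(iv) `|M ∩ H|` is maximum among all such triples also satisfying (iii). -/
def MaxIntersecting (G : SimpleGraph V) (M H H' : Set (Sym2 V)) : Prop :=
  IsMaxMatching G M ∧ IsLambdaMuPair G H H' ∧
  (∀ M₂ H₂ H₂' : Set (Sym2 V), IsMaxMatching G M₂ → IsLambdaMuPair G H₂ H₂' →
    (M₂ ∩ (H₂ ∪ H₂')).ncard ≤ (M ∩ (H ∪ H')).ncard) ∧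
  (∀ M₂ H₂ H₂' : Set (Sym2 V), IsMaxMatching G M₂ → IsLambdaMuPair G H₂ H₂' →
    (M₂ ∩ (H₂ ∪ H₂')).ncard = (M ∩ (H ∪ H')).ncard → (M₂ ∩ H₂).ncard ≤ (M ∩ H).ncard)

namespace Stmt14Aux
open SimpleGraph

theorem alt_count {α : Type*} (P : α → Prop) [DecidablePred P] :
    ∀ (l : List α) (hne : l ≠ []), List.Chain' (fun s t => ¬(P s ↔ P t)) l →
    l.countP (fun x => decide (P x)) + 1 =
      l.countP (fun x => decide (¬ P x)) + ((if P (l.head hne) then 1 else 0) + (if P (l.getLast hne) then 1 else 0)) := by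
  intro l
  induction l with
  | nil => intro h; exact absurd rfl h
  | cons a t ih =>
    intro _ hc
    match t, hc with
    | [], _ => by_cases h : P a <;> simp [List.countP_cons, h]
    | b :: t', hc =>
      have hab : ¬(P a ↔ P b) := (List.isChain_cons_cons.mp hc).1
      have ht := ih (by simp) (List.isChain_cons_cons.mp hc).2
      have hgl : (a :: b :: t').getLast (by simp) = (b :: t').getLast (by simp) :=
        List.getLast_cons (by simp)
      rw [hgl]
      simp only [List.countP_cons, List.head_cons, decide_eq_true_eq] at ht ⊢
      by_cases h : P a
      · have hb : ¬ P b := fun hb => hab ⟨fun _ => hb, fun _ => h⟩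
        simp only [h, hb, if_true, if_false, decide_not, decide_eq_true_eq,
          not_false_eq_true, not_true, decide_true, decide_false] at ht ⊢
        omega
      · have hb : P b := by
          by_contra hb'
          exact hab ⟨fun h' => absurd h' h, fun h' => absurd h' hb'⟩
        simp only [h, hb, if_true, if_false, decide_not, decide_eq_true_eq,
          not_false_eq_true, not_true, decide_true, decide_false] at ht ⊢
        omega

theorem ncard_filter_list {α : Type*} (S : Set α) [DecidablePred (· ∈ S)] (l : List α)
    (hl : l.Nodup) : {x | x ∈ l ∧ x ∈ S}.ncard = l.countP (fun x => decide (x ∈ S)) := by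
  classical
  have h1 : {x | x ∈ l ∧ x ∈ S} = ↑((l.filter (fun x => decide (x ∈ S))).toFinset) := by
    ext x; simp [List.mem_filter]
  rw [h1, Set.ncard_coe_finset, List.toFinset_card_of_nodup (hl.filter _),
    ← List.countP_eq_length_filter]

variable [Fintype V] {G : SimpleGraph V}

theorem head_edge_unique {u w : V} {p : G.Walk u w} (hp : p.IsPath) {f : Sym2 V}
    (hf : f ∈ p.edges) (hx : u ∈ f) : p.edges.head? = some f := by
  cases p with
  | nil => simp at hf
  | cons h q =>
    simp only [Walk.edges_cons, List.head?_cons, Option.some.injEq]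
    rcases List.mem_cons.mp hf with h' | hfq
    · exact h'.symm
    · exfalso
      obtain ⟨z, rfl⟩ := Sym2.mem_iff_exists.mp hx
      exact ((Walk.cons_isPath_iff _ _).mp hp).2 (Walk.fst_mem_support_of_mem_edges q hfq)

theorem last_edge_unique {u w : V} {p : G.Walk u w} (hp : p.IsPath) {f : Sym2 V}
    (hf : f ∈ p.edges) (hx : w ∈ f) : p.edges.getLast? = some f := by
  have := head_edge_unique (p := p.reverse) hp.reverse (by rw [Walk.edges_reverse]; exact List.mem_reverse.mpr hf) hx
  rwa [Walk.edges_reverse, List.head?_reverse] at this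

theorem start_mem_head_edge {u w : V} {p : G.Walk u w} {f : Sym2 V}
    (hf : p.edges.head? = some f) : u ∈ f := by
  cases p with
  | nil => simp at hf
  | cons h q =>
    simp only [Walk.edges_cons, List.head?_cons, Option.some.injEq] at hf
    rw [← hf]; exact Sym2.mem_mk_left _ _

theorem end_mem_last_edge {u w : V} {p : G.Walk u w} {f : Sym2 V}
    (hf : p.edges.getLast? = some f) : w ∈ f := by
  have : p.reverse.edges.head? = some f := by rw [Walk.edges_reverse, List.head?_reverse]; exact hf
  exact start_mem_head_edge this

theorem mem_support_of_mem_edge {u w : V} {p : G.Walk u w} {f : Sym2 V} {v : V}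
    (hf : f ∈ p.edges) (hv : v ∈ f) : v ∈ p.support := by
  obtain ⟨z, rfl⟩ := Sym2.mem_iff_exists.mp hv
  exact Walk.fst_mem_support_of_mem_edges p hf

theorem exists_edge_of_mem_support {u w : V} {p : G.Walk u w} {v : V}
    (hv : v ∈ p.support) (hvu : v ≠ u) : ∃ f ∈ p.edges, v ∈ f := by
  induction p with
  | nil => simp at hv; exact absurd hv hvu
  | @cons a b c h q ih =>
    rcases List.mem_cons.mp (by simpa using hv) with rfl | hvq
    · exact absurd rfl hvu
    · by_cases hb : v = b
      · exact ⟨s(a, b), by simp, by simp [hb]⟩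
      · obtain ⟨f, hf, hvf⟩ := ih hvq hb
        exact ⟨f, by simp [hf], hvf⟩

theorem second_edge {R : Sym2 V → Sym2 V → Prop} {u w : V} (p : G.Walk u w)
    (hp : p.IsPath) (hc : List.Chain' R p.edges) {f : Sym2 V} (hf : f ∈ p.edges) {v : V}
    (hv : v ∈ f) (hvu : v ≠ u) (hvw : v ≠ w) :
    ∃ g ∈ p.edges, v ∈ g ∧ g ≠ f ∧ (R f g ∨ R g f) := by
  induction p with
  | nil => simp at hf
  | @cons a b c h q ih =>
    have hpq : q.IsPath := ((Walk.cons_isPath_iff _ _).mp hp).1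
    have hanq : a ∉ q.support := ((Walk.cons_isPath_iff _ _).mp hp).2
    rcases List.mem_cons.mp hf with rfl | hfq
    · -- f = s(a,b), so v = b
      have hvb : v = b := by rcases Sym2.mem_iff.mp hv with h' | h'; exact absurd h' hvu; exact h'
      cases q with
      | nil => exact absurd hvb hvw
      | @cons _ d _ h' q' =>
        refine ⟨s(b, d), by simp, by simp [hvb], ?_, Or.inl ?_⟩
        · intro heq
          rcases Sym2.eq_iff.mp heq with ⟨h1, _⟩ | ⟨_, h2⟩
          · exact h.ne h1.symm
          · apply hanq
            rw [show a = d from h2.symm]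
            simp [Walk.support_cons]
        · exact (List.isChain_cons_cons.mp hc).1
    · by_cases hvb : v = b
      · have hq : q.edges.head? = some f := head_edge_unique hpq hfq (hvb ▸ hv)
        refine ⟨s(a, b), by simp, by simp [hvb], ?_, Or.inr ?_⟩
        · intro heq
          rw [← heq] at hfq
          exact hanq (mem_support_of_mem_edge hfq (Sym2.mem_mk_left _ _))
        · have := (List.isChain_cons.mp (by simpa [List.Chain'] using hc)).1
          exact this f hq
      · obtain ⟨g, hg, h1, h2, h3⟩ := ih hpq (by
          have := (List.isChain_cons.mp (by simpa [List.Chain'] using hc)).2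
          exact this) hfq hvb hvw
        exact ⟨g, by simp [hg], h1, h2, h3⟩

theorem interior_collision_A {A B : Set (Sym2 V)} (hA : IsMatchingSet G A)
    {u w : V} {p : G.Walk u w} (hp : p.IsPath) (halt : AltList A B p.edges) {v : V}
    (hv : v ∈ p.support) (hvu : v ≠ u) (hvw : v ≠ w) {φ : Sym2 V} (hφ : φ ∈ A)
    (hvφ : v ∈ φ) : φ ∈ p.edges := by
  obtain ⟨f, hf, hvf⟩ := exists_edge_of_mem_support hv hvu
  by_cases hfA : f ∈ A
  · by_cases hne : φ = f
    · exact hne ▸ hf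
    · exact absurd ⟨hvφ, hvf⟩ (hA.2 φ hφ f hfA hne v)
  · obtain ⟨g, hg, hvg, hgf, hR⟩ := second_edge p hp halt.2 hf hvf hvu hvw
    have hgA : g ∈ A := by
      by_contra hgA
      rcases hR with hR | hR
      · exact hR ⟨fun h' => absurd h' hfA, fun h' => absurd h' hgA⟩
      · exact hR ⟨fun h' => absurd h' hgA, fun h' => absurd h' hfA⟩
    by_cases hne : φ = g
    · exact hne ▸ hg
    · exact absurd ⟨hvφ, hvg⟩ (hA.2 φ hφ g hgA hne v)

theorem interior_collision_B {A B : Set (Sym2 V)} (hB : IsMatchingSet G B)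
    {u w : V} {p : G.Walk u w} (hp : p.IsPath) (halt : AltList A B p.edges) {v : V}
    (hv : v ∈ p.support) (hvu : v ≠ u) (hvw : v ≠ w) {φ : Sym2 V} (hφ : φ ∈ B)
    (hvφ : v ∈ φ) : φ ∈ p.edges := by
  obtain ⟨f, hf, hvf⟩ := exists_edge_of_mem_support hv hvu
  rcases halt.1 f hf with hfAB | hfAB
  · -- f ∈ A \ B : need the neighbour edge, which is in B
    obtain ⟨g, hg, hvg, hgf, hR⟩ := second_edge p hp halt.2 hf hvf hvu hvw
    have hgB : g ∈ B := by
      rcases halt.1 g hg with h' | h'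
      · exfalso
        rcases hR with hR | hR
        · exact hR ⟨fun _ => h'.1, fun _ => hfAB.1⟩
        · exact hR ⟨fun _ => hfAB.1, fun _ => h'.1⟩
      · exact h'.1
    by_cases hne : φ = g
    · exact hne ▸ hg
    · exact absurd ⟨hvφ, hvg⟩ (hB.2 φ hφ g hgB hne v)
  · by_cases hne : φ = f
    · exact hne ▸ hf
    · exact absurd ⟨hvφ, hvf⟩ (hB.2 φ hφ f hfAB.1 hne v)

theorem altList_reverse {A B : Set (Sym2 V)} {l : List (Sym2 V)} (h : AltList A B l) :
    AltList A B l.reverse := by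
  refine ⟨fun e he => h.1 e (List.mem_reverse.mp he), ?_⟩
  refine List.isChain_reverse.mpr ?_
  exact h.2.imp fun a b hab h' => hab ⟨h'.mpr, h'.mp⟩

theorem isAltPath_reverse {A B : Set (Sym2 V)} {a b : V} {q : G.Walk a b}
    (h : IsAltPath G A B q) : IsAltPath G A B q.reverse := by
  refine ⟨by simpa using h.1, h.2.1.reverse, ?_⟩
  rw [Walk.edges_reverse]
  exact altList_reverse h.2.2

theorem isMaxAltPath_reverse {A B : Set (Sym2 V)} {a b : V} {p : G.Walk a b}
    (h : IsMaxAltPath G A B p) : IsMaxAltPath G A B p.reverse := by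
  refine ⟨isAltPath_reverse h.1, h.2.2, fun w hw hcon => ?_⟩
  rw [Walk.reverse_reverse p] at hcon
  exact h.2.1 w hw hcon


theorem ncard_diff_add_inter {α : Type*} [Finite α] (s t : Set α) :
    (s \ t).ncard + (s ∩ t).ncard = s.ncard := by
  rw [← Set.ncard_union_eq (Set.disjoint_of_subset_right Set.inter_subset_right
    Set.disjoint_sdiff_left) (Set.toFinite _) (Set.toFinite _), Set.diff_union_inter]

theorem lambda_le {A B : Set (Sym2 V)} (hA : IsMatchingSet G A) (hB : IsMatchingSet G B)
    (hd : Disjoint A B) : A.ncard + B.ncard ≤ lambdaParam G := by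
  apply le_csSup
  · refine ⟨2 * Nat.card (Sym2 V), ?_⟩
    rintro n ⟨A', B', _, _, _, rfl⟩
    have h1 : A'.ncard ≤ Nat.card (Sym2 V) := by
      rw [← Set.ncard_univ]; exact Set.ncard_le_ncard (Set.subset_univ _) (Set.toFinite _)
    have h2 : B'.ncard ≤ Nat.card (Sym2 V) := by
      rw [← Set.ncard_univ]; exact Set.ncard_le_ncard (Set.subset_univ _) (Set.toFinite _)
    omega
  · exact ⟨A, B, hA, hB, hd, rfl⟩

theorem mu_le {A B : Set (Sym2 V)} (hA : IsMatchingSet G A) (hB : IsMatchingSet G B)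
    (hd : Disjoint A B) (hsum : A.ncard + B.ncard = lambdaParam G) :
    A.ncard ≤ muParam G := by
  apply le_csSup
  · refine ⟨Nat.card (Sym2 V), ?_⟩
    rintro n ⟨A', _, _, _, _, _, rfl⟩
    rw [← Set.ncard_univ]; exact Set.ncard_le_ncard (Set.subset_univ _) (Set.toFinite _)
  · exact ⟨A, B, hA, hB, hd, hsum, rfl⟩

theorem mswap {M H H' : Set (Sym2 V)} (hmax : MaxIntersecting G M H H') (C : Set (Sym2 V))
    (hCE : C ⊆ G.edgeSet)
    (hCH : C \ M ⊆ H)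
    (hCMH : ∀ x, x ∈ M → x ∈ C → x ∉ H)
    (hcov : ∀ f ∈ C \ M, ∀ v ∈ f, (∃ g ∈ M ∩ C, v ∈ g) ∨ ∀ m ∈ M, v ∉ m)
    (hbal : (M ∩ C).ncard ≤ (C \ M).ncard)
    (hne : (C \ M).Nonempty) : False := by
  obtain ⟨⟨hMm, hMmax⟩, hpair, hiii, hiv⟩ := hmax
  have hHm : IsMatchingSet G H := hpair.1
  set M₂ := (M \ C) ∪ (C \ M) with hM₂
  have hM₂m : IsMatchingSet G M₂ := by
    constructor
    · rintro e (he | he)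
      · exact hMm.1 he.1
      · exact hCE he.1
    · rintro e he f hf hnef v ⟨hve, hvf⟩
      rcases he with he | he <;> rcases hf with hf | hf
      · exact hMm.2 e he.1 f hf.1 hnef v ⟨hve, hvf⟩
      · rcases hcov f hf v hvf with ⟨g, hg, hvg⟩ | hfree
        · by_cases hge : g = e
          · exact he.2 (hge ▸ hg.2)
          · exact hMm.2 g hg.1 e he.1 hge v ⟨hvg, hve⟩
        · exact hfree e he.1 hve
      · rcases hcov e he v hve with ⟨g, hg, hvg⟩ | hfree
        · by_cases hge : g = f
          · exact hf.2 (hge ▸ hg.2)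
          · exact hMm.2 g hg.1 f hf.1 hge v ⟨hvg, hvf⟩
        · exact hfree f hf.1 hvf
      · exact hHm.2 e (hCH he) f (hCH hf) hnef v ⟨hve, hvf⟩
  have hdisj2 : Disjoint (M \ C) (C \ M) := by
    rw [Set.disjoint_left]; rintro x ⟨hxM, hxC⟩ ⟨hxC', _⟩; exact hxC hxC'
  have hcard : M₂.ncard = (M \ C).ncard + (C \ M).ncard :=
    Set.ncard_union_eq hdisj2 (Set.toFinite _) (Set.toFinite _)
  have hMsplit : (M \ C).ncard + (M ∩ C).ncard = M.ncard := ncard_diff_add_inter M C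
  rcases lt_or_eq_of_le hbal with hlt | heq
  · have := hMmax M₂ hM₂m
    omega
  · have hM₂card : M₂.ncard = M.ncard := by omega
    have hM₂max : IsMaxMatching G M₂ :=
      ⟨hM₂m, fun M' h' => le_trans (hMmax M' h') (le_of_eq hM₂card.symm)⟩
    have hsub : C \ M ⊆ H ∪ H' := fun x hx => Or.inl (hCH hx)
    have hset1 : M₂ ∩ (H ∪ H') = ((M ∩ (H ∪ H')) \ C) ∪ (C \ M) := by
      ext x
      constructor
      · rintro ⟨hx | hx, hX⟩
        · exact Or.inl ⟨⟨hx.1, hX⟩, hx.2⟩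
        · exact Or.inr hx
      · rintro (⟨⟨hxM, hX⟩, hxC⟩ | hx)
        · exact ⟨Or.inl ⟨hxM, hxC⟩, hX⟩
        · exact ⟨Or.inr hx, hsub hx⟩
    have hd1 : Disjoint ((M ∩ (H ∪ H')) \ C) (C \ M) := by
      rw [Set.disjoint_left]; rintro x ⟨_, hxC⟩ ⟨hxC', _⟩; exact hxC hxC'
    have e1 : (M₂ ∩ (H ∪ H')).ncard = ((M ∩ (H ∪ H')) \ C).ncard + (C \ M).ncard := by
      rw [hset1]; exact Set.ncard_union_eq hd1 (Set.toFinite _) (Set.toFinite _)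
    have e2 : ((M ∩ (H ∪ H')) \ C).ncard + ((M ∩ (H ∪ H')) ∩ C).ncard = (M ∩ (H ∪ H')).ncard :=
      ncard_diff_add_inter _ _
    have hle := hiii M₂ H H' hM₂max hpair
    have h3 : ((M ∩ (H ∪ H')) ∩ C).ncard ≤ (M ∩ C).ncard :=
      Set.ncard_le_ncard (fun x hx => ⟨hx.1.1, hx.2⟩) (Set.toFinite _)
    have heq3 : (M₂ ∩ (H ∪ H')).ncard = (M ∩ (H ∪ H')).ncard := by omega
    have hle2 := hiv M₂ H H' hM₂max hpair heq3
    have hset2 : M₂ ∩ H = (M ∩ H) ∪ (C \ M) := by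
      ext x
      constructor
      · rintro ⟨hx | hx, hX⟩
        · exact Or.inl ⟨hx.1, hX⟩
        · exact Or.inr hx
      · rintro (⟨hxM, hX⟩ | hx)
        · exact ⟨Or.inl ⟨hxM, fun hxC => hCMH x hxM hxC hX⟩, hX⟩
        · exact ⟨Or.inr hx, hCH hx⟩
    have hd2 : Disjoint (M ∩ H) (C \ M) := by
      rw [Set.disjoint_left]; rintro x ⟨hxM, _⟩ ⟨_, hxM'⟩; exact hxM' hxM
    have e4 : (M₂ ∩ H).ncard = (M ∩ H).ncard + (C \ M).ncard := by
      rw [hset2]; exact Set.ncard_union_eq hd2 (Set.toFinite _) (Set.toFinite _)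
    have hpos : 0 < (C \ M).ncard := (Set.ncard_pos (Set.toFinite _)).mpr hne
    omega


theorem maxrun {A B : Set (Sym2 V)} (hA : IsMatchingSet G A) (hB : IsMatchingSet G B)
    (hdisj : Disjoint A B) {x : V} (hxA : ∀ φ ∈ A, x ∉ φ) {g : Sym2 V} (hg : g ∈ B)
    (hxg : x ∈ g) :
    ∃ (t : V) (r : G.Walk x t), IsMaxAltPath G A B r ∧ r.edges.head? = some g ∧
      ∃ fl, r.edges.getLast? = some fl ∧ (∀ φ, (φ ∈ A ∨ φ ∈ B) → t ∈ φ → φ = fl) := by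
  obtain ⟨y, rfl⟩ := Sym2.mem_iff_exists.mp hxg
  have hadj : G.Adj x y := hB.1 hg
  have hgA : s(x, y) ∉ A := Set.disjoint_right.mp hdisj hg
  set S : Set ℕ := {n | ∃ (t : V) (r : G.Walk x t), IsAltPath G A B r ∧
    r.edges.head? = some s(x, y) ∧ r.length = n} with hS
  have hS1 : 1 ∈ S := by
    refine ⟨y, SimpleGraph.Walk.cons hadj SimpleGraph.Walk.nil, ⟨by simp, ?_, ?_⟩, by simp, by simp⟩
    · rw [Walk.cons_isPath_iff]
      exact ⟨Walk.IsPath.nil, by simp [hadj.ne]⟩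
    · constructor
      · intro e he
        simp only [Walk.edges_cons, Walk.edges_nil, List.mem_singleton] at he
        subst he
        exact Or.inr ⟨hg, hgA⟩
      · exact List.isChain_singleton _
  have hbdd : BddAbove S := by
    refine ⟨Fintype.card V, ?_⟩
    rintro n ⟨t, r, hr, _, rfl⟩
    exact hr.2.1.length_lt.le
  obtain ⟨t, r, hr, hrh, hrlen⟩ := Nat.sSup_mem ⟨1, hS1⟩ hbdd
  have hEne : r.edges ≠ [] := by
    intro h; rw [h] at hrh; simp at hrh
  have hnoext : ∀ (w : V) (h : G.Adj w t), ¬ IsAltPath G A B (SimpleGraph.Walk.cons h r.reverse) := by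
    intro w h hcon
    have h1 : IsAltPath G A B (SimpleGraph.Walk.cons h r.reverse).reverse := isAltPath_reverse hcon
    have h2 : (SimpleGraph.Walk.cons h r.reverse).reverse.edges.head? = some s(x, y) := by
      rw [Walk.edges_reverse, Walk.edges_cons, List.reverse_cons, Walk.edges_reverse,
        List.reverse_reverse]
      cases hE : r.edges with
      | nil => exact absurd hE hEne
      | cons a l =>
        rw [hE] at hrh
        simp only [List.head?_cons, Option.some.injEq] at hrh
        simp [hrh]
    have hmem : (SimpleGraph.Walk.cons h r.reverse).reverse.length ∈ S := ⟨w, _, h1, h2, rfl⟩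
    have hle := le_csSup hbdd hmem
    have hlen2 : (SimpleGraph.Walk.cons h r.reverse).reverse.length = r.length + 1 := by simp
    omega
  have hstart : ∀ (w : V) (h : G.Adj w x), ¬ IsAltPath G A B (SimpleGraph.Walk.cons h r) := by
    intro w h hcon
    have hchain := hcon.2.2.2
    rw [Walk.edges_cons] at hchain
    have hrel : ¬(s(w, x) ∈ A ↔ s(x, y) ∈ A) := by
      cases hE : r.edges with
      | nil => exact absurd hE hEne
      | cons a l =>
        rw [hE] at hchain hrh
        simp only [List.head?_cons, Option.some.injEq] at hrh
        subst hrh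
        exact (List.isChain_cons_cons.mp hchain).1
    have hwxA : s(w, x) ∈ A := by
      by_contra hn
      exact hrel ⟨fun h' => absurd h' hn, fun h' => absurd h' hgA⟩
    exact hxA _ hwxA (Sym2.mem_mk_right w x)
  obtain ⟨fl, hfl⟩ : ∃ fl, r.edges.getLast? = some fl :=
    ⟨r.edges.getLast hEne, List.getLast?_eq_getLast hEne⟩
  have hflE : fl ∈ r.edges := by
    have h2 := List.getLast?_eq_getLast (l := r.edges) hEne
    rw [hfl] at h2
    simp only [Option.some.injEq] at h2
    exact h2 ▸ List.getLast_mem hEne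
  have hxt : x ≠ t := by
    intro hxteq
    subst hxteq
    cases r with
    | nil => simpa using hr.1
    | cons h1 q =>
      exact ((Walk.cons_isPath_iff _ _).mp hr.2.1).2 (q.end_mem_support)
  have htfl : t ∈ fl := end_mem_last_edge hfl
  have hflAB := hr.2.2.1 fl hflE
  have huniq : ∀ φ, (φ ∈ A ∨ φ ∈ B) → t ∈ φ → φ = fl := by
    intro φ hφAB htφ
    by_cases hsame : (φ ∈ A ↔ fl ∈ A)
    · rcases hφAB with hφ | hφ
      · have hflA : fl ∈ A := hsame.mp hφ
        by_contra hne; exact hA.2 φ hφ fl hflA hne t ⟨htφ, htfl⟩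
      · have hφA : φ ∉ A := Set.disjoint_right.mp hdisj hφ
        have hflB : fl ∈ B := by
          rcases hflAB with h' | h'
          · exact absurd (hsame.mpr h'.1) hφA
          · exact h'.1
        by_contra hne; exact hB.2 φ hφ fl hflB hne t ⟨htφ, htfl⟩
    · exfalso
      obtain ⟨w, rfl⟩ := Sym2.mem_iff_exists.mp htφ
      have hadj2 : G.Adj t w := by
        rcases hφAB with h' | h'
        · exact hA.1 h'
        · exact hB.1 h'
      have hwt : w ≠ t := fun h' => hadj2.ne' h'
      have halt2 : AltList A B (SimpleGraph.Walk.cons hadj2.symm r.reverse).edges := by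
        rw [Walk.edges_cons]
        have hsw : s(w, t) = s(t, w) := Sym2.eq_swap
        constructor
        · intro e he
          rcases List.mem_cons.mp he with rfl | he'
          · rw [hsw]
            rcases hφAB with h' | h'
            · exact Or.inl ⟨h', Set.disjoint_left.mp hdisj h'⟩
            · exact Or.inr ⟨h', Set.disjoint_right.mp hdisj h'⟩
          · exact (altList_reverse hr.2.2).1 e (by rwa [Walk.edges_reverse] at he')
        · refine List.isChain_cons.mpr ?_
          constructor
          · intro z hz
            rw [Walk.edges_reverse, List.head?_reverse, hfl] at hz
            simp only [Option.mem_def, Option.some.injEq] at hz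
            subst hz
            rw [hsw]
            exact hsame
          · rw [Walk.edges_reverse]
            exact (altList_reverse hr.2.2).2
      have hnp : ¬ (SimpleGraph.Walk.cons hadj2.symm r.reverse).IsPath := by
        intro hp
        exact hnoext w hadj2.symm ⟨by simp, hp, halt2⟩
      have hwsup : w ∈ r.support := by
        by_contra hws
        apply hnp
        rw [Walk.cons_isPath_iff]
        exact ⟨hr.2.1.reverse, by rwa [Walk.support_reverse, List.mem_reverse]⟩
      by_cases hwx : w = x
      · rcases hφAB with hφ | hφ
        · exact hxA _ hφ (hwx ▸ Sym2.mem_mk_right t w)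
        · have hφg : s(t, w) = s(x, y) := by
            by_contra hne
            exact hB.2 _ hφ _ hg hne x ⟨hwx ▸ Sym2.mem_mk_right t w, Sym2.mem_mk_left x y⟩
          have hty : t = y := by
            rcases Sym2.eq_iff.mp hφg with ⟨h1, _⟩ | ⟨h1, _⟩
            · exact absurd h1 hxt.symm
            · exact h1
          cases r with
          | nil => simpa using hr.1
          | @cons _ b _ h1 q =>
            have hb : b = y := by
              simp only [Walk.edges_cons, List.head?_cons, Option.some.injEq] at hrh
              exact Sym2.congr_right.mp hrh
            have hqp : q.IsPath := ((Walk.cons_isPath_iff _ _).mp hr.2.1).1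
            cases q with
            | nil =>
              have hfleq : fl = s(x, t) := by
                simp only [Walk.edges_cons, Walk.edges_nil] at hfl
                simp at hfl
                exact hfl.symm
              have heq2 : s(t, w) = fl := hφg.trans (show s(x, y) = fl by rw [hfleq, hb])
              exact hsame (heq2 ▸ Iff.rfl)
            | cons h2 q2 =>
              refine ((Walk.cons_isPath_iff _ _).mp hqp).2 ?_
              rw [hb.trans hty.symm]
              exact q2.end_mem_support
      · have hwint : s(t, w) ∈ r.edges := by
          rcases hφAB with hφ | hφ
          · exact interior_collision_A hA hr.2.1 hr.2.2 hwsup hwx hwt hφ (Sym2.mem_mk_right t w)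
          · exact interior_collision_B hB hr.2.1 hr.2.2 hwsup hwx hwt hφ (Sym2.mem_mk_right t w)
        have : r.edges.getLast? = some s(t, w) := last_edge_unique hr.2.1 hwint (Sym2.mem_mk_left t w)
        rw [hfl] at this
        simp only [Option.some.injEq] at this
        exact hsame (this.symm ▸ Iff.rfl)
  exact ⟨t, r, ⟨hr, hstart, hnoext⟩, hrh, fl, hfl, huniq⟩


theorem start_ne_end {u v : V} {p : G.Walk u v} (hp : p.IsPath) (hl : 0 < p.length) :
    u ≠ v := by
  intro h
  subst h
  cases p with
  | nil => simp at hl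
  | cons h1 q => exact ((Walk.cons_isPath_iff _ _).mp hp).2 q.end_mem_support

open Classical in
theorem alt_ncard {S : Set (Sym2 V)} {l : List (Sym2 V)} (hnd : l.Nodup) (hne : l ≠ [])
    (hc : List.Chain' (fun s t => ¬(s ∈ S ↔ t ∈ S)) l) :
    {a | a ∈ l ∧ a ∈ S}.ncard + 1 =
      {a | a ∈ l ∧ a ∉ S}.ncard +
        ((if l.head hne ∈ S then 1 else 0) + (if l.getLast hne ∈ S then 1 else 0)) := by
  classical
  have h1 := ncard_filter_list S l hnd
  have h2 := ncard_filter_list Sᶜ l hnd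
  have h3 : {a | a ∈ l ∧ a ∉ S} = {a | a ∈ l ∧ a ∈ Sᶜ} := rfl
  have h4 := alt_count (fun a => a ∈ S) l hne hc
  have h5 : l.countP (fun x => decide (x ∈ Sᶜ)) = l.countP (fun x => decide (¬ x ∈ S)) := by
    apply List.countP_congr
    intro x _
    simp [decide_eq_decide]
  rw [h3, h2, h5, h1, h4]

theorem alt_ncard_00 {S : Set (Sym2 V)} {l : List (Sym2 V)} (hnd : l.Nodup) (hne : l ≠ [])
    (hc : List.Chain' (fun s t => ¬(s ∈ S ↔ t ∈ S)) l)
    (hh : l.head hne ∉ S) (hl : l.getLast hne ∉ S) :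
    {a | a ∈ l ∧ a ∈ S}.ncard + 1 = {a | a ∈ l ∧ a ∉ S}.ncard := by
  classical
  have h := alt_ncard hnd hne hc
  rw [if_neg hh, if_neg hl] at h
  omega

theorem alt_ncard_01 {S : Set (Sym2 V)} {l : List (Sym2 V)} (hnd : l.Nodup) (hne : l ≠ [])
    (hc : List.Chain' (fun s t => ¬(s ∈ S ↔ t ∈ S)) l)
    (hh : l.head hne ∉ S) (hl : l.getLast hne ∈ S) :
    {a | a ∈ l ∧ a ∈ S}.ncard = {a | a ∈ l ∧ a ∉ S}.ncard := by
  classical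
  have h := alt_ncard hnd hne hc
  rw [if_neg hh, if_pos hl] at h
  omega

theorem alt_ncard_10 {S : Set (Sym2 V)} {l : List (Sym2 V)} (hnd : l.Nodup) (hne : l ≠ [])
    (hc : List.Chain' (fun s t => ¬(s ∈ S ↔ t ∈ S)) l)
    (hh : l.head hne ∈ S) (hl : l.getLast hne ∉ S) :
    {a | a ∈ l ∧ a ∈ S}.ncard = {a | a ∈ l ∧ a ∉ S}.ncard := by
  classical
  have h := alt_ncard hnd hne hc
  rw [if_pos hh, if_neg hl] at h
  omega

theorem alt_ncard_11 {S : Set (Sym2 V)} {l : List (Sym2 V)} (hnd : l.Nodup) (hne : l ≠ [])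
    (hc : List.Chain' (fun s t => ¬(s ∈ S ↔ t ∈ S)) l)
    (hh : l.head hne ∈ S) (hl : l.getLast hne ∈ S) :
    {a | a ∈ l ∧ a ∈ S}.ncard = {a | a ∈ l ∧ a ∉ S}.ncard + 1 := by
  classical
  have h := alt_ncard hnd hne hc
  rw [if_pos hh, if_pos hl] at h
  omega

theorem ncard_mem_list {l : List (Sym2 V)} (hnd : l.Nodup) :
    {a | a ∈ l}.ncard = l.length := by
  classical
  have : {a | a ∈ l} = ↑l.toFinset := by ext a; simp
  rw [this, Set.ncard_coe_finset, List.toFinset_card_of_nodup hnd]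

theorem iii_contra {M H H' : Set (Sym2 V)} (hmax : MaxIntersecting G M H H')
    {H₂ H₂' : Set (Sym2 V)}
    (h₂m : IsMatchingSet G H₂) (h₂'m : IsMatchingSet G H₂') (hd : Disjoint H₂ H₂')
    (hsum : H₂.ncard + H₂'.ncard = lambdaParam G) (hμ : H₂.ncard = muParam G)
    (hbig : (M ∩ (H ∪ H')).ncard < (M ∩ (H₂ ∪ H₂')).ncard) : False :=
  absurd (hmax.2.2.1 M H₂ H₂' hmax.1 ⟨h₂m, h₂'m, hd, hsum, hμ⟩) (not_le.mpr hbig)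

theorem surgery {M H H' : Set (Sym2 V)} (hmax : MaxIntersecting G M H H')
    {H₂ H₂' : Set (Sym2 V)}
    (h₂ : IsMatchingSet G H₂) (h₂' : IsMatchingSet G H₂') (hd : Disjoint H₂ H₂')
    (hsum : H₂.ncard + H₂'.ncard = lambdaParam G) (hμ : H₂.ncard = muParam G)
    (hU : H₂ ∪ H₂' = H ∪ H') {e d : Sym2 V}
    (heM : e ∈ M) (heU : e ∉ H ∪ H') (heE : e ∈ G.edgeSet)
    (hd₂ : d ∈ H₂') (hdM : d ∉ M)
    (hmatch : ∀ h' ∈ H₂', h' ≠ d → ∀ v : V, ¬(v ∈ e ∧ v ∈ h')) : False := by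
  set H₃ : Set (Sym2 V) := (H₂' \ {d}) ∪ {e} with hH₃
  have heH₂' : e ∉ H₂' := fun h => heU (hU ▸ Or.inr h)
  have heH₂ : e ∉ H₂ := fun h => heU (hU ▸ Or.inl h)
  have h₃m : IsMatchingSet G H₃ := by
    constructor
    · rintro f (hf | hf)
      · exact h₂'.1 hf.1
      · rw [Set.mem_singleton_iff] at hf
        exact hf ▸ heE
    · rintro f hf f' hf' hne v ⟨hvf, hvf'⟩
      rcases hf with hf | hf <;> rcases hf' with hf' | hf'
      · exact h₂'.2 f hf.1 f' hf'.1 hne v ⟨hvf, hvf'⟩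
      · rw [Set.mem_singleton_iff] at hf'
        subst hf'
        exact hmatch f hf.1 hf.2 v ⟨hvf', hvf⟩
      · rw [Set.mem_singleton_iff] at hf
        subst hf
        exact hmatch f' hf'.1 hf'.2 v ⟨hvf, hvf'⟩
      · rw [Set.mem_singleton_iff] at hf hf'
        exact hne (hf.trans hf'.symm)
  have hd₃ : Disjoint H₂ H₃ := by
    rw [Set.disjoint_left]
    rintro a haH₂ (ha | ha)
    · exact Set.disjoint_left.mp hd haH₂ ha.1
    · rw [Set.mem_singleton_iff] at ha
      exact heH₂ (ha ▸ haH₂)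
  have hcard₃ : H₃.ncard = H₂'.ncard := by
    have h1 : e ∉ H₂' \ {d} := fun h => heH₂' h.1
    have h2 : H₃ = insert e (H₂' \ {d}) := by rw [hH₃, Set.union_singleton]
    rw [h2, Set.ncard_insert_of_notMem h1 (Set.toFinite _)]
    rw [← Set.ncard_diff_singleton_add_one hd₂ (Set.toFinite _)]
  have hdH₂ : d ∉ H₂ := Set.disjoint_right.mp hd hd₂
  have hU₃ : H₂ ∪ H₃ = ((H ∪ H') \ {d}) ∪ {e} := by
    rw [← hU]
    ext a
    simp only [Set.mem_union, Set.mem_diff, Set.mem_singleton_iff, hH₃]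
    constructor
    · rintro (ha | (⟨ha, had⟩ | ha))
      · exact Or.inl ⟨Or.inl ha, fun h => hdH₂ (h ▸ ha)⟩
      · exact Or.inl ⟨Or.inr ha, had⟩
      · exact Or.inr ha
    · rintro (⟨ha | ha, had⟩ | ha)
      · exact Or.inl ha
      · exact Or.inr (Or.inl ⟨ha, had⟩)
      · exact Or.inr (Or.inr ha)
  have hbig : (M ∩ (H ∪ H')).ncard < (M ∩ (H₂ ∪ H₃)).ncard := by
    have hs : M ∩ (H₂ ∪ H₃) = insert e (M ∩ (H ∪ H')) := by
      rw [hU₃]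
      ext a
      simp only [Set.mem_inter_iff, Set.mem_union, Set.mem_diff, Set.mem_singleton_iff,
        Set.mem_insert_iff]
      constructor
      · rintro ⟨haM, (⟨ha, _⟩ | ha)⟩
        · exact Or.inr ⟨haM, ha⟩
        · exact Or.inl ha
      · rintro (rfl | ⟨haM, ha⟩)
        · exact ⟨heM, Or.inr rfl⟩
        · exact ⟨haM, Or.inl ⟨ha, fun h => hdM (h ▸ haM)⟩⟩
    rw [hs, Set.ncard_insert_of_notMem (fun h => heU h.2) (Set.toFinite _)]
    omega
  exact iii_contra hmax h₂ h₃m hd₃ (by omega) hμ hbig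


theorem mem_of_getLast? {l : List (Sym2 V)} {a : Sym2 V} (h : l.getLast? = some a) :
    a ∈ l := by
  cases l with
  | nil => simp at h
  | cons b t =>
    have h2 := List.getLast?_eq_getLast (l := b :: t) (by simp)
    rw [h] at h2
    simp only [Option.some.injEq] at h2
    exact h2 ▸ List.getLast_mem _

theorem mem_of_head? {l : List (Sym2 V)} {a : Sym2 V} (h : l.head? = some a) :
    a ∈ l := by
  cases l with
  | nil => simp at h
  | cons b t =>
    simp only [List.head?_cons, Option.some.injEq] at h
    exact h ▸ List.mem_cons_self

theorem comp_pair {H H' : Set (Sym2 V)} (hH : IsMatchingSet G H) (hH' : IsMatchingSet G H')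
    (hd : Disjoint H H') {x t : V} {r : G.Walk x t} (hrp : r.IsPath)
    (halt : AltList H H' r.edges) {g fl : Sym2 V}
    (hhead : r.edges.head? = some g) (hgH' : g ∈ H')
    (hlast : r.edges.getLast? = some fl)
    (hxH : ∀ φ ∈ H, x ∉ φ) (huniq : ∀ φ, (φ ∈ H ∨ φ ∈ H') → t ∈ φ → φ = fl) :
    IsMatchingSet G ((H \ {a | a ∈ r.edges}) ∪ ({a | a ∈ r.edges} ∩ H')) ∧
    IsMatchingSet G ((H' \ {a | a ∈ r.edges}) ∪ ({a | a ∈ r.edges} ∩ H)) ∧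
    Disjoint ((H \ {a | a ∈ r.edges}) ∪ ({a | a ∈ r.edges} ∩ H'))
      ((H' \ {a | a ∈ r.edges}) ∪ ({a | a ∈ r.edges} ∩ H)) ∧
    ((H \ {a | a ∈ r.edges}) ∪ ({a | a ∈ r.edges} ∩ H')) ∪
      ((H' \ {a | a ∈ r.edges}) ∪ ({a | a ∈ r.edges} ∩ H)) = H ∪ H' ∧
    ((H \ {a | a ∈ r.edges}) ∪ ({a | a ∈ r.edges} ∩ H')).ncard + ({a | a ∈ r.edges} ∩ H).ncard
      = H.ncard + ({a | a ∈ r.edges} ∩ H').ncard ∧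
    ((H' \ {a | a ∈ r.edges}) ∪ ({a | a ∈ r.edges} ∩ H)).ncard + ({a | a ∈ r.edges} ∩ H').ncard
      = H'.ncard + ({a | a ∈ r.edges} ∩ H).ncard := by
  set C : Set (Sym2 V) := {a | a ∈ r.edges} with hC
  have hgC : g ∈ C := mem_of_head? hhead
  have hflC : fl ∈ C := mem_of_getLast? hlast
  have hxg : x ∈ g := start_mem_head_edge hhead
  have key : ∀ h₁ ∈ H, h₁ ∉ C → ∀ b ∈ C, ∀ v : V, ¬(v ∈ h₁ ∧ v ∈ b) := by
    rintro h₁ hH₁ hh₁C b hb v ⟨hv1, hv2⟩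
    have hvsup : v ∈ r.support := mem_support_of_mem_edge hb hv2
    by_cases hvx : v = x
    · exact hxH h₁ hH₁ (hvx ▸ hv1)
    by_cases hvt : v = t
    · exact hh₁C (huniq h₁ (Or.inl hH₁) (hvt ▸ hv1) ▸ hflC)
    · exact hh₁C (interior_collision_A hH hrp halt hvsup hvx hvt hH₁ hv1)
  have key' : ∀ h₁ ∈ H', h₁ ∉ C → ∀ b ∈ C, ∀ v : V, ¬(v ∈ h₁ ∧ v ∈ b) := by
    rintro h₁ hH₁ hh₁C b hb v ⟨hv1, hv2⟩
    have hvsup : v ∈ r.support := mem_support_of_mem_edge hb hv2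
    by_cases hvx : v = x
    · by_cases hne : h₁ = g
      · exact hh₁C (hne ▸ hgC)
      · exact hH'.2 h₁ hH₁ g hgH' hne v ⟨hv1, hvx ▸ hxg⟩
    by_cases hvt : v = t
    · exact hh₁C (huniq h₁ (Or.inr hH₁) (hvt ▸ hv1) ▸ hflC)
    · exact hh₁C (interior_collision_B hH' hrp halt hvsup hvx hvt hH₁ hv1)
  have hCE : C ⊆ G.edgeSet := fun a ha => r.edges_subset_edgeSet ha
  have hm₂ : IsMatchingSet G ((H \ C) ∪ (C ∩ H')) := by
    constructor
    · rintro f (hf | hf)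
      · exact hH.1 hf.1
      · exact hH'.1 hf.2
    · rintro f hf f' hf' hne v hv
      rcases hf with hf | hf <;> rcases hf' with hf' | hf'
      · exact hH.2 f hf.1 f' hf'.1 hne v hv
      · exact key f hf.1 hf.2 f' hf'.1 v hv
      · exact key f' hf'.1 hf'.2 f hf.1 v ⟨hv.2, hv.1⟩
      · exact hH'.2 f hf.2 f' hf'.2 hne v hv
  have hm₂' : IsMatchingSet G ((H' \ C) ∪ (C ∩ H)) := by
    constructor
    · rintro f (hf | hf)
      · exact hH'.1 hf.1
      · exact hH.1 hf.2
    · rintro f hf f' hf' hne v hv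
      rcases hf with hf | hf <;> rcases hf' with hf' | hf'
      · exact hH'.2 f hf.1 f' hf'.1 hne v hv
      · exact key' f hf.1 hf.2 f' hf'.1 v hv
      · exact key' f' hf'.1 hf'.2 f hf.1 v ⟨hv.2, hv.1⟩
      · exact hH.2 f hf.2 f' hf'.2 hne v hv
  have hdij : Disjoint ((H \ C) ∪ (C ∩ H')) ((H' \ C) ∪ (C ∩ H)) := by
    rw [Set.disjoint_left]
    rintro a (ha | ha) (hb | hb)
    · exact Set.disjoint_left.mp hd ha.1 hb.1
    · exact ha.2 hb.1
    · exact hb.2 ha.1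
    · exact Set.disjoint_left.mp hd hb.2 ha.2
  have hCsub : C ⊆ H ∪ H' := fun a ha => by
    rcases halt.1 a ha with h' | h'
    · exact Or.inl h'.1
    · exact Or.inr h'.1
  have hUeq : ((H \ C) ∪ (C ∩ H')) ∪ ((H' \ C) ∪ (C ∩ H)) = H ∪ H' := by
    ext a
    constructor
    · rintro ((ha | ha) | (ha | ha))
      · exact Or.inl ha.1
      · exact Or.inr ha.2
      · exact Or.inr ha.1
      · exact Or.inl ha.2
    · rintro (ha | ha)
      · by_cases hac : a ∈ C
        · exact Or.inr (Or.inr ⟨hac, ha⟩)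
        · exact Or.inl (Or.inl ⟨ha, hac⟩)
      · by_cases hac : a ∈ C
        · exact Or.inl (Or.inr ⟨hac, ha⟩)
        · exact Or.inr (Or.inl ⟨ha, hac⟩)
  have hdisj1 : Disjoint (H \ C) (C ∩ H') := by
    rw [Set.disjoint_left]
    rintro a ⟨_, hac⟩ ⟨hac', _⟩
    exact hac hac'
  have hdisj2 : Disjoint (H' \ C) (C ∩ H) := by
    rw [Set.disjoint_left]
    rintro a ⟨_, hac⟩ ⟨hac', _⟩
    exact hac hac'
  have e1 : ((H \ C) ∪ (C ∩ H')).ncard = (H \ C).ncard + (C ∩ H').ncard :=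
    Set.ncard_union_eq hdisj1 (Set.toFinite _) (Set.toFinite _)
  have e2 : ((H' \ C) ∪ (C ∩ H)).ncard = (H' \ C).ncard + (C ∩ H).ncard :=
    Set.ncard_union_eq hdisj2 (Set.toFinite _) (Set.toFinite _)
  have e3 : (H \ C).ncard + (H ∩ C).ncard = H.ncard := ncard_diff_add_inter H C
  have e4 : (H' \ C).ncard + (H' ∩ C).ncard = H'.ncard := ncard_diff_add_inter H' C
  rw [Set.inter_comm H C] at e3
  rw [Set.inter_comm H' C] at e4
  exact ⟨hm₂, hm₂', hdij, hUeq, by omega, by omega⟩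


theorem head_eq_of_head? {l : List (Sym2 V)} {a : Sym2 V} (hne : l ≠ [])
    (h : l.head? = some a) : l.head hne = a := by
  cases l with
  | nil => exact absurd rfl hne
  | cons b t => simpa using h

theorem getLast_eq_of_getLast? {l : List (Sym2 V)} {a : Sym2 V} (hne : l ≠ [])
    (h : l.getLast? = some a) : l.getLast hne = a := by
  have h2 := List.getLast?_eq_getLast (l := l) hne
  rw [h] at h2
  simpa using h2.symm

theorem hcov_interior {M H : Set (Sym2 V)} {u v : V} {p : G.Walk u v} (hpp : p.IsPath)
    (halt : AltList M H p.edges) {f : Sym2 V} (hf : f ∈ p.edges) (hfM : f ∉ M) {w : V}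
    (hw : w ∈ f) (hwu : w ≠ u) (hwv : w ≠ v) :
    ∃ g, (g ∈ p.edges ∧ g ∈ M) ∧ w ∈ g := by
  obtain ⟨g, hg, hwg, hgf, hR⟩ := second_edge p hpp halt.2 hf hw hwu hwv
  have hgM : g ∈ M := by
    by_contra hgM
    rcases hR with hR | hR
    · exact hR ⟨fun h' => absurd h' hfM, fun h' => absurd h' hgM⟩
    · exact hR ⟨fun h' => absurd h' hgM, fun h' => absurd h' hfM⟩
  exact ⟨g, ⟨hg, hgM⟩, hwg⟩

theorem start_H_free {M H H' : Set (Sym2 V)} (hmax : MaxIntersecting G M H H')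
    {u v : V} {p : G.Walk u v} (hp : IsMaxAltPath G M H p) {e : Sym2 V}
    (he : p.edges.head? = some e) (heM : e ∈ M) (heH : e ∉ H) :
    ∀ φ ∈ H, u ∉ φ := by
  intro φ hφH huφ
  have hMm : IsMatchingSet G M := hmax.1.1
  have hHm : IsMatchingSet G H := hmax.2.1.1
  have hpp : p.IsPath := hp.1.2.1
  have halt : AltList M H p.edges := hp.1.2.2
  have hEne : p.edges ≠ [] := fun h => by rw [h] at he; simp at he
  have heE : e ∈ p.edges := mem_of_head? he
  have hue : u ∈ e := start_mem_head_edge he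
  have hne_φe : φ ≠ e := fun h => heH (h ▸ hφH)
  have hφM : φ ∉ M := fun hφM => hMm.2 φ hφM e heM hne_φe u ⟨huφ, hue⟩
  obtain ⟨w, rfl⟩ := Sym2.mem_iff_exists.mp huφ
  have hadj : G.Adj w u := (hHm.1 hφH).symm
  have hswu : s(w, u) = s(u, w) := Sym2.eq_swap
  have haltc : AltList M H (SimpleGraph.Walk.cons hadj p).edges := by
    rw [Walk.edges_cons]
    constructor
    · intro a ha
      rcases List.mem_cons.mp ha with rfl | ha'
      · exact Or.inr ⟨hswu ▸ hφH, hswu ▸ hφM⟩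
      · exact halt.1 a ha'
    · refine List.isChain_cons.mpr ?_
      refine ⟨?_, halt.2⟩
      intro z hz
      rw [he] at hz
      simp only [Option.mem_def, Option.some.injEq] at hz
      subst hz
      rw [hswu]
      exact fun hiff => hφM (hiff.mpr heM)
  have hwsup : w ∈ p.support := by
    by_contra hws
    exact hp.2.1 w hadj ⟨by simp, (Walk.cons_isPath_iff _ _).mpr ⟨hpp, hws⟩, haltc⟩
  have hwu : w ≠ u := hadj.ne
  have hφnE : s(u, w) ∉ p.edges := fun hφE => by
    have h2 := head_edge_unique hpp hφE (Sym2.mem_mk_left u w)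
    rw [he] at h2
    exact hne_φe (by simpa using h2.symm)
  by_cases hwv : w = v
  · -- chord case
    obtain ⟨fk, hfk⟩ : ∃ fk, p.edges.getLast? = some fk :=
      ⟨p.edges.getLast hEne, List.getLast?_eq_getLast hEne⟩
    have hfkE : fk ∈ p.edges := mem_of_getLast? hfk
    have hvfk : v ∈ fk := end_mem_last_edge hfk
    have hfkM : fk ∈ M := by
      by_contra hfkM
      have hfkH : fk ∈ H := by
        rcases halt.1 fk hfkE with h' | h'
        · exact absurd h'.1 hfkM
        · exact h'.1
      by_cases hφfk : s(u, w) = fk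
      · exact hφnE (hφfk ▸ hfkE)
      · exact hHm.2 _ hφH fk hfkH hφfk v ⟨hwv ▸ Sym2.mem_mk_right u w, hvfk⟩
    -- counting
    have hcnt := alt_ncard_11 (S := M) hpp.edges_nodup hEne halt.2
      (by rw [head_eq_of_head? hEne he]; exact heM)
      (by rw [getLast_eq_of_getLast? hEne hfk]; exact hfkM)
    set C : Set (Sym2 V) := insert s(u, w) {a | a ∈ p.edges} with hCdef
    have hMC : M ∩ C = {a | a ∈ p.edges ∧ a ∈ M} := by
      ext a
      simp only [Set.mem_inter_iff, hCdef, Set.mem_insert_iff, Set.mem_setOf_eq]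
      constructor
      · rintro ⟨haM, rfl | haE⟩
        · exact absurd haM hφM
        · exact ⟨haE, haM⟩
      · rintro ⟨haE, haM⟩
        exact ⟨haM, Or.inr haE⟩
    have hCM : C \ M = insert s(u, w) {a | a ∈ p.edges ∧ a ∉ M} := by
      ext a
      simp only [Set.mem_diff, hCdef, Set.mem_insert_iff, Set.mem_setOf_eq]
      constructor
      · rintro ⟨rfl | haE, haM⟩
        · exact Or.inl rfl
        · exact Or.inr ⟨haE, haM⟩
      · rintro (rfl | ⟨haE, haM⟩)
        · exact ⟨Or.inl rfl, hφM⟩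
        · exact ⟨Or.inr haE, haM⟩
    have hnotin2 : s(u, w) ∉ {a | a ∈ p.edges ∧ a ∉ M} := fun h => hφnE h.1
    have hbal : (M ∩ C).ncard ≤ (C \ M).ncard := by
      rw [hMC, hCM, Set.ncard_insert_of_notMem hnotin2 (Set.toFinite _)]
      omega
    refine mswap hmax C ?_ ?_ ?_ ?_ hbal ⟨s(u, w), Or.inl rfl, hφM⟩
    · rintro a (rfl | ha)
      · exact hHm.1 hφH
      · exact p.edges_subset_edgeSet ha
    · rintro a ⟨(rfl | ha), haM⟩
      · exact hφH
      · rcases halt.1 a ha with h' | h'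
        · exact absurd h'.1 haM
        · exact h'.1
    · rintro a haM (rfl | ha)
      · exact absurd haM hφM
      · intro haH
        rcases halt.1 a ha with h' | h'
        · exact h'.2 haH
        · exact h'.2 haM
    · rintro f ⟨hfC, hfM⟩ z hz
      left
      rcases hfC with rfl | hfE
      · rcases Sym2.mem_iff.mp hz with rfl | rfl
        · exact ⟨e, ⟨heM, Or.inr heE⟩, hue⟩
        · exact ⟨fk, ⟨hfkM, Or.inr hfkE⟩, hwv ▸ hvfk⟩
      · by_cases hzu : z = u
        · exact absurd (head_edge_unique hpp hfE (hzu ▸ hz)) (fun h2 => hfM (by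
            rw [he] at h2
            exact (by simpa using h2.symm : f = e) ▸ heM))
        by_cases hzv : z = v
        · exact absurd (last_edge_unique hpp hfE (hzv ▸ hz)) (fun h2 => hfM (by
            rw [hfk] at h2
            exact (by simpa using h2.symm : f = fk) ▸ hfkM))
        · obtain ⟨g, ⟨hgE, hgM⟩, hzg⟩ := hcov_interior hpp halt hfE hfM hz hzu hzv
          exact ⟨g, ⟨hgM, Or.inr hgE⟩, hzg⟩
  · -- interior case
    have hφE := interior_collision_B hHm hpp halt hwsup hwu hwv hφH (Sym2.mem_mk_right u w)
    exact hφnE hφE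


theorem inter_setOf (M : Set (Sym2 V)) (l : List (Sym2 V)) :
    M ∩ {a | a ∈ l} = {a | a ∈ l ∧ a ∈ M} := by
  ext a; exact ⟨fun ⟨h1, h2⟩ => ⟨h2, h1⟩, fun ⟨h1, h2⟩ => ⟨h2, h1⟩⟩

theorem diff_setOf (M : Set (Sym2 V)) (l : List (Sym2 V)) :
    {a | a ∈ l} \ M = {a | a ∈ l ∧ a ∉ M} := rfl

theorem first_edge_M {M H H' : Set (Sym2 V)} (hmax : MaxIntersecting G M H H')
    {u v : V} {p : G.Walk u v} (hp : IsMaxAltPath G M H p) {e : Sym2 V}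
    (he : p.edges.head? = some e) : e ∈ M ∧ e ∉ H := by
  have hMm : IsMatchingSet G M := hmax.1.1
  have hHm : IsMatchingSet G H := hmax.2.1.1
  have hpp : p.IsPath := hp.1.2.1
  have halt : AltList M H p.edges := hp.1.2.2
  have hEne : p.edges ≠ [] := fun h => by rw [h] at he; simp at he
  have heE : e ∈ p.edges := mem_of_head? he
  have hue : u ∈ e := start_mem_head_edge he
  rcases halt.1 e heE with ⟨heM, heH⟩ | ⟨heH, heM⟩
  · exact ⟨heM, heH⟩
  exfalso
  obtain ⟨fk, hfk⟩ : ∃ fk, p.edges.getLast? = some fk :=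
    ⟨p.edges.getLast hEne, List.getLast?_eq_getLast hEne⟩
  have hfkE : fk ∈ p.edges := mem_of_getLast? hfk
  have hvfk : v ∈ fk := end_mem_last_edge hfk
  have hheadeq : p.edges.head hEne = e := head_eq_of_head? hEne he
  have hlasteq : p.edges.getLast hEne = fk := getLast_eq_of_getLast? hEne hfk
  by_cases hucov : ∃ m ∈ M, u ∈ m
  · obtain ⟨m, hmM, hum⟩ := hucov
    have hmH : m ∉ H := by
      intro hmH'
      by_cases hme : m = e
      · exact heM (hme ▸ hmM)
      · exact hHm.2 m hmH' e heH hme u ⟨hum, hue⟩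
    obtain ⟨w, rfl⟩ := Sym2.mem_iff_exists.mp hum
    have hadj : G.Adj w u := (hMm.1 hmM).symm
    have hswu : s(w, u) = s(u, w) := Sym2.eq_swap
    have haltc : AltList M H (SimpleGraph.Walk.cons hadj p).edges := by
      rw [Walk.edges_cons]
      constructor
      · intro a ha
        rcases List.mem_cons.mp ha with rfl | ha'
        · exact Or.inl ⟨hswu ▸ hmM, hswu ▸ hmH⟩
        · exact halt.1 a ha'
      · refine List.isChain_cons.mpr ?_
        refine ⟨?_, halt.2⟩
        intro z hz
        rw [he] at hz
        simp only [Option.mem_def, Option.some.injEq] at hz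
        subst hz
        rw [hswu]
        exact fun hiff => heM (hiff.mp hmM)
    have hwsup : w ∈ p.support := by
      by_contra hws
      exact hp.2.1 w hadj ⟨by simp, (Walk.cons_isPath_iff _ _).mpr ⟨hpp, hws⟩, haltc⟩
    have hwu : w ≠ u := hadj.ne
    have hmnE : s(u, w) ∉ p.edges := fun hmE => by
      have h2 := head_edge_unique hpp hmE (Sym2.mem_mk_left u w)
      rw [he] at h2
      exact heM ((by simpa using h2.symm : s(u, w) = e) ▸ hmM)
    by_cases hwv : w = v
    · -- chord case
      have hfkM : fk ∉ M := by
        intro hfkM'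
        by_cases hmfk : s(u, w) = fk
        · exact hmnE (hmfk ▸ hfkE)
        · exact hMm.2 _ hmM fk hfkM' hmfk v ⟨hwv ▸ Sym2.mem_mk_right u w, hvfk⟩
      have hcnt := alt_ncard_00 (S := M) hpp.edges_nodup hEne halt.2
        (by rw [hheadeq]; exact heM) (by rw [hlasteq]; exact hfkM)
      set C : Set (Sym2 V) := insert s(u, w) {a | a ∈ p.edges} with hCdef
      have hMC : M ∩ C = insert s(u, w) {a | a ∈ p.edges ∧ a ∈ M} := by
        ext a
        simp only [Set.mem_inter_iff, hCdef, Set.mem_insert_iff, Set.mem_setOf_eq]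
        constructor
        · rintro ⟨haM, rfl | haE⟩
          · exact Or.inl rfl
          · exact Or.inr ⟨haE, haM⟩
        · rintro (rfl | ⟨haE, haM⟩)
          · exact ⟨hmM, Or.inl rfl⟩
          · exact ⟨haM, Or.inr haE⟩
      have hCM : C \ M = {a | a ∈ p.edges ∧ a ∉ M} := by
        ext a
        simp only [Set.mem_diff, hCdef, Set.mem_insert_iff, Set.mem_setOf_eq]
        constructor
        · rintro ⟨rfl | haE, haM⟩
          · exact absurd hmM haM
          · exact ⟨haE, haM⟩
        · rintro ⟨haE, haM⟩
          exact ⟨Or.inr haE, haM⟩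
      have hnotin2 : s(u, w) ∉ {a | a ∈ p.edges ∧ a ∈ M} := fun h => hmnE h.1
      have hbal : (M ∩ C).ncard ≤ (C \ M).ncard := by
        rw [hMC, hCM, Set.ncard_insert_of_notMem hnotin2 (Set.toFinite _)]
        omega
      refine mswap hmax C ?_ ?_ ?_ ?_ hbal ⟨e, Or.inr heE, heM⟩
      · rintro a (rfl | ha)
        · exact hMm.1 hmM
        · exact p.edges_subset_edgeSet ha
      · rintro a ⟨(rfl | ha), haM⟩
        · exact absurd hmM haM
        · rcases halt.1 a ha with h' | h'
          · exact absurd h'.1 haM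
          · exact h'.1
      · rintro a haM (rfl | ha)
        · exact hmH
        · intro haH
          rcases halt.1 a ha with h' | h'
          · exact h'.2 haH
          · exact h'.2 haM
      · rintro f ⟨hfC, hfM⟩ z hz
        left
        have hfE : f ∈ p.edges := by
          rcases hfC with rfl | hfE
          · exact absurd hmM hfM
          · exact hfE
        by_cases hzu : z = u
        · exact ⟨s(u, w), ⟨hmM, Or.inl rfl⟩, hzu ▸ Sym2.mem_mk_left u w⟩
        by_cases hzv : z = v
        · exact ⟨s(u, w), ⟨hmM, Or.inl rfl⟩, hzv ▸ hwv ▸ Sym2.mem_mk_right u w⟩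
        · obtain ⟨g, ⟨hgE, hgM⟩, hzg⟩ := hcov_interior hpp halt hfE hfM hz hzu hzv
          exact ⟨g, ⟨hgM, Or.inr hgE⟩, hzg⟩
    · -- interior case for w
      exact hmnE (interior_collision_A hMm hpp halt hwsup hwu hwv hmM (Sym2.mem_mk_right u w))
  · push_neg at hucov
    rcases halt.1 fk hfkE with ⟨hfkM, hfkH⟩ | ⟨hfkH, hfkM⟩
    · -- fk ∈ M \ H : swap along the path
      have hcnt := alt_ncard_01 (S := M) hpp.edges_nodup hEne halt.2
        (by rw [hheadeq]; exact heM) (by rw [hlasteq]; exact hfkM)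
      set C : Set (Sym2 V) := {a | a ∈ p.edges} with hCdef
      have hbal : (M ∩ C).ncard ≤ (C \ M).ncard := by
        rw [hCdef, inter_setOf, diff_setOf]
        omega
      refine mswap hmax C (fun a ha => p.edges_subset_edgeSet ha) ?_ ?_ ?_ hbal ⟨e, heE, heM⟩
      · rintro a ⟨ha, haM⟩
        rcases halt.1 a ha with h' | h'
        · exact absurd h'.1 haM
        · exact h'.1
      · rintro a haM ha haH
        rcases halt.1 a ha with h' | h'
        · exact h'.2 haH
        · exact h'.2 haM
      · rintro f ⟨hfE, hfM⟩ z hz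
        by_cases hzu : z = u
        · exact Or.inr (fun m hm hzm => hucov m hm (hzu ▸ hzm))
        by_cases hzv : z = v
        · exfalso
          have h2 := last_edge_unique hpp hfE (hzv ▸ hz)
          rw [hfk] at h2
          exact hfM ((by simpa using h2.symm : f = fk) ▸ hfkM)
        · obtain ⟨g, ⟨hgE, hgM⟩, hzg⟩ := hcov_interior hpp halt hfE hfM hz hzu hzv
          exact Or.inl ⟨g, ⟨hgM, hgE⟩, hzg⟩
    · -- fk ∈ H \ M
      by_cases hvcov : ∃ m ∈ M, v ∈ m
      · obtain ⟨m', hm'M, hvm'⟩ := hvcov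
        have hm'H : m' ∉ H := by
          intro hm'H'
          by_cases hmfk : m' = fk
          · exact hfkM (hmfk ▸ hm'M)
          · exact hHm.2 m' hm'H' fk hfkH hmfk v ⟨hvm', hvfk⟩
        obtain ⟨w', rfl⟩ := Sym2.mem_iff_exists.mp hvm'
        have hadj' : G.Adj w' v := (hMm.1 hm'M).symm
        have hswv : s(w', v) = s(v, w') := Sym2.eq_swap
        have haltc : AltList M H (SimpleGraph.Walk.cons hadj' p.reverse).edges := by
          rw [Walk.edges_cons]
          constructor
          · intro a ha
            rcases List.mem_cons.mp ha with rfl | ha'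
            · exact Or.inl ⟨hswv ▸ hm'M, hswv ▸ hm'H⟩
            · exact (altList_reverse halt).1 a (by rwa [Walk.edges_reverse] at ha')
          · refine List.isChain_cons.mpr ?_
            constructor
            · intro z hz
              rw [Walk.edges_reverse, List.head?_reverse, hfk] at hz
              simp only [Option.mem_def, Option.some.injEq] at hz
              subst hz
              rw [hswv]
              exact fun hiff => hfkM (hiff.mp hm'M)
            · rw [Walk.edges_reverse]
              exact (altList_reverse halt).2
        have hw'sup : w' ∈ p.support := by
          by_contra hws
          refine hp.2.2 w' hadj' ⟨by simp [hp.1.1], ?_, haltc⟩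
          rw [Walk.cons_isPath_iff]
          exact ⟨hpp.reverse, by rwa [Walk.support_reverse, List.mem_reverse]⟩
        by_cases hw'v : w' = v
        · exact hadj'.ne hw'v
        by_cases hw'u : w' = u
        · exact hucov _ hm'M (hw'u ▸ Sym2.mem_mk_right v w')
        · have hm'E := interior_collision_A hMm hpp halt hw'sup hw'u hw'v hm'M
            (Sym2.mem_mk_right v w')
          have h2 := last_edge_unique hpp hm'E (Sym2.mem_mk_left v w')
          rw [hfk] at h2
          exact hfkM ((by simpa using h2.symm : s(v, w') = fk) ▸ hm'M)
      · push_neg at hvcov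
        have hcnt := alt_ncard_00 (S := M) hpp.edges_nodup hEne halt.2
          (by rw [hheadeq]; exact heM) (by rw [hlasteq]; exact hfkM)
        set C : Set (Sym2 V) := {a | a ∈ p.edges} with hCdef
        have hbal : (M ∩ C).ncard ≤ (C \ M).ncard := by
          rw [hCdef, inter_setOf, diff_setOf]
          omega
        refine mswap hmax C (fun a ha => p.edges_subset_edgeSet ha) ?_ ?_ ?_ hbal ⟨e, heE, heM⟩
        · rintro a ⟨ha, haM⟩
          rcases halt.1 a ha with h' | h'
          · exact absurd h'.1 haM
          · exact h'.1
        · rintro a haM ha haH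
          rcases halt.1 a ha with h' | h'
          · exact h'.2 haH
          · exact h'.2 haM
        · rintro f ⟨hfE, hfM⟩ z hz
          by_cases hzu : z = u
          · exact Or.inr (fun m hm hzm => hucov m hm (hzu ▸ hzm))
          by_cases hzv : z = v
          · exact Or.inr (fun m hm hzm => hvcov m hm (hzv ▸ hzm))
          · obtain ⟨g, ⟨hgE, hgM⟩, hzg⟩ := hcov_interior hpp halt hfE hfM hz hzu hzv
            exact Or.inl ⟨g, ⟨hgM, hgE⟩, hzg⟩


theorem first_edge_H' {M H H' : Set (Sym2 V)} (hmax : MaxIntersecting G M H H')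
    {u v : V} {p : G.Walk u v} (hp : IsMaxAltPath G M H p) {e : Sym2 V}
    (he : p.edges.head? = some e) : e ∈ H' := by
  by_contra heH'
  obtain ⟨heM, heH⟩ := first_edge_M hmax hp he
  have hufree : ∀ φ ∈ H, u ∉ φ := start_H_free hmax hp he heM heH
  have hMm : IsMatchingSet G M := hmax.1.1
  have hHm : IsMatchingSet G H := hmax.2.1.1
  have hH'm : IsMatchingSet G H' := hmax.2.1.2.1
  have hdHH' : Disjoint H H' := hmax.2.1.2.2.1
  have hsumHH' : H.ncard + H'.ncard = lambdaParam G := hmax.2.1.2.2.2.1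
  have hmuH : H.ncard = muParam G := hmax.2.1.2.2.2.2
  have hue : u ∈ e := start_mem_head_edge he
  obtain ⟨y, rfl⟩ := Sym2.mem_iff_exists.mp hue
  have hadj : G.Adj u y := hMm.1 heM
  have huy : u ≠ y := hadj.ne
  have hyu : y ≠ u := huy.symm
  have hyM : ∀ m ∈ M, y ∈ m → m = s(u, y) := by
    intro m hm hym
    by_contra hne
    exact hMm.2 m hm _ heM hne y ⟨hym, Sym2.mem_mk_right u y⟩
  have heU : s(u, y) ∉ H ∪ H' := by
    rintro (h | h)
    · exact heH h
    · exact heH' h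
  have heEdge : s(u, y) ∈ G.edgeSet := hMm.1 heM
  by_cases hxcov : ∃ g ∈ H', u ∈ g
  · obtain ⟨g, hgH', hug⟩ := hxcov
    obtain ⟨t, r, hrmax, hrh, fl, hfl, huniq⟩ := maxrun hHm hH'm hdHH' hufree hgH' hug
    have hrp : r.IsPath := hrmax.1.2.1
    have haltr : AltList H H' r.edges := hrmax.1.2.2
    have hrEne : r.edges ≠ [] := fun h => by rw [h] at hrh; simp at hrh
    obtain ⟨hm₂, hm₂', hdij, hUeq, hc2, hc2'⟩ :=
      comp_pair hHm hH'm hdHH' hrp haltr hrh hgH' hfl hufree huniq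
    have hgC : g ∈ {a | a ∈ r.edges} := mem_of_head? hrh
    have hflC : fl ∈ {a | a ∈ r.edges} := mem_of_getLast? hfl
    have hgH : g ∉ H := Set.disjoint_right.mp hdHH' hgH'
    have hheadr : r.edges.head hrEne = g := head_eq_of_head? hrEne hrh
    have hlastr : r.edges.getLast hrEne = fl := getLast_eq_of_getLast? hrEne hfl
    have hCHeq : {a | a ∈ r.edges} ∩ H = {a | a ∈ r.edges ∧ a ∈ H} := rfl
    have hCH'eq : {a | a ∈ r.edges} ∩ H' = {a | a ∈ r.edges ∧ a ∉ H} := by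
      ext a
      constructor
      · rintro ⟨h1, h2⟩
        exact ⟨h1, Set.disjoint_right.mp hdHH' h2⟩
      · rintro ⟨h1, h2⟩
        rcases haltr.1 a h1 with h' | h'
        · exact absurd h'.1 h2
        · exact ⟨h1, h'.1⟩
    rcases haltr.1 fl hflC with ⟨hflH, hflH'⟩ | ⟨hflH', hflH⟩
    · -- fl ∈ H : even component
      have hcnt := alt_ncard_01 (S := H) hrp.edges_nodup hrEne haltr.2
        (by rw [hheadr]; exact hgH) (by rw [hlastr]; exact hflH)
      rw [← hCHeq, ← hCH'eq] at hcnt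
      have hcardH₂ : ((H \ {a | a ∈ r.edges}) ∪ ({a | a ∈ r.edges} ∩ H')).ncard = H.ncard := by
        omega
      have hsum₂ : ((H \ {a | a ∈ r.edges}) ∪ ({a | a ∈ r.edges} ∩ H')).ncard +
          ((H' \ {a | a ∈ r.edges}) ∪ ({a | a ∈ r.edges} ∩ H)).ncard = lambdaParam G := by
        omega
      have hmu₂ : ((H \ {a | a ∈ r.edges}) ∪ ({a | a ∈ r.edges} ∩ H')).ncard = muParam G :=
        hcardH₂.trans hmuH
      by_cases hysup : y ∈ r.support
      · -- find an H-edge d of the component at y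
        obtain ⟨d, hdC, hdH, hyd⟩ : ∃ d, d ∈ {a | a ∈ r.edges} ∧ d ∈ H ∧ y ∈ d := by
          by_cases hyt : y = t
          · exact ⟨fl, hflC, hflH, hyt ▸ end_mem_last_edge hfl⟩
          · obtain ⟨f, hf, hyf⟩ := exists_edge_of_mem_support hysup hyu
            by_cases hfH : f ∈ H
            · exact ⟨f, hf, hfH, hyf⟩
            · obtain ⟨d, ⟨hdE, hdH⟩, hyd⟩ := hcov_interior hrp haltr hf hfH hyf hyu hyt
              exact ⟨d, hdE, hdH, hyd⟩
        have hdH₂' : d ∈ (H' \ {a | a ∈ r.edges}) ∪ ({a | a ∈ r.edges} ∩ H) :=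
          Or.inr ⟨hdC, hdH⟩
        have hdM : d ∉ M := fun hdM' => heH ((hyM d hdM' hyd) ▸ hdH)
        refine surgery hmax hm₂ hm₂' hdij hsum₂ hmu₂ hUeq heM heU heEdge hdH₂' hdM ?_
        rintro h' hh' hne z ⟨hz1, hz2⟩
        rcases Sym2.mem_iff.mp hz1 with rfl | rfl
        · rcases hh' with ⟨hh'H', hh'C⟩ | ⟨hh'C, hh'H⟩
          · by_cases hgeq : h' = g
            · exact hh'C (hgeq ▸ hgC)
            · exact hH'm.2 h' hh'H' g hgH' hgeq z ⟨hz2, hug⟩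
          · exact hufree h' hh'H hz2
        · rcases hh' with ⟨hh'H', hh'C⟩ | ⟨hh'C, hh'H⟩
          · by_cases hyt : z = t
            · exact hh'C (huniq h' (Or.inr hh'H') (hyt ▸ hz2) ▸ hflC)
            · exact hh'C (interior_collision_B hH'm hrp haltr hysup hyu hyt hh'H' hz2)
          · exact hHm.2 h' hh'H d hdH hne z ⟨hz2, hyd⟩
      · by_cases hycov : ∃ g' ∈ H', y ∈ g'
        · obtain ⟨g', hg'H', hyg'⟩ := hycov
          have hg'C : g' ∉ {a | a ∈ r.edges} :=
            fun h => hysup (mem_support_of_mem_edge h hyg')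
          have hg'M : g' ∉ M := fun h' => heH' ((hyM g' h' hyg') ▸ hg'H')
          refine surgery hmax hm₂ hm₂' hdij hsum₂ hmu₂ hUeq heM heU heEdge
            (Or.inl ⟨hg'H', hg'C⟩) hg'M ?_
          rintro h' hh' hne z ⟨hz1, hz2⟩
          rcases Sym2.mem_iff.mp hz1 with rfl | rfl
          · rcases hh' with ⟨hh'H', hh'C⟩ | ⟨hh'C, hh'H⟩
            · by_cases hgeq : h' = g
              · exact hh'C (hgeq ▸ hgC)
              · exact hH'm.2 h' hh'H' g hgH' hgeq z ⟨hz2, hug⟩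
            · exact hufree h' hh'H hz2
          · rcases hh' with ⟨hh'H', hh'C⟩ | ⟨hh'C, hh'H⟩
            · exact hne (by
                by_contra hne'
                exact hH'm.2 h' hh'H' g' hg'H' hne' z ⟨hz2, hyg'⟩)
            · exact hysup (mem_support_of_mem_edge hh'C hz2)
        · -- y is H'-free : lambda contradiction
          have hmadd : IsMatchingSet G
              (((H' \ {a | a ∈ r.edges}) ∪ ({a | a ∈ r.edges} ∩ H)) ∪ {s(u, y)}) := by
            constructor
            · rintro f (hf | hf)
              · exact hm₂'.1 hf
              · rw [Set.mem_singleton_iff] at hf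
                exact hf ▸ heEdge
            · rintro f hf f' hf' hne z hz
              rcases hf with hf | hf <;> rcases hf' with hf' | hf'
              · exact hm₂'.2 f hf f' hf' hne z hz
              · rw [Set.mem_singleton_iff] at hf'
                subst hf'
                rcases Sym2.mem_iff.mp hz.2 with rfl | rfl
                · rcases hf with ⟨hh'H', hh'C⟩ | ⟨hh'C, hh'H⟩
                  · by_cases hgeq : f = g
                    · exact hh'C (hgeq ▸ hgC)
                    · exact hH'm.2 f hh'H' g hgH' hgeq z ⟨hz.1, hug⟩
                  · exact hufree f hh'H hz.1
                · rcases hf with ⟨hh'H', hh'C⟩ | ⟨hh'C, hh'H⟩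
                  · exact hycov ⟨f, hh'H', hz.1⟩
                  · exact hysup (mem_support_of_mem_edge hh'C hz.1)
              · rw [Set.mem_singleton_iff] at hf
                subst hf
                rcases Sym2.mem_iff.mp hz.1 with rfl | rfl
                · rcases hf' with ⟨hh'H', hh'C⟩ | ⟨hh'C, hh'H⟩
                  · by_cases hgeq : f' = g
                    · exact hh'C (hgeq ▸ hgC)
                    · exact hH'm.2 f' hh'H' g hgH' hgeq z ⟨hz.2, hug⟩
                  · exact hufree f' hh'H hz.2
                · rcases hf' with ⟨hh'H', hh'C⟩ | ⟨hh'C, hh'H⟩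
                  · exact hycov ⟨f', hh'H', hz.2⟩
                  · exact hysup (mem_support_of_mem_edge hh'C hz.2)
              · rw [Set.mem_singleton_iff] at hf hf'
                exact hne (hf.trans hf'.symm)
          have hdisj3 : Disjoint ((H \ {a | a ∈ r.edges}) ∪ ({a | a ∈ r.edges} ∩ H'))
              (((H' \ {a | a ∈ r.edges}) ∪ ({a | a ∈ r.edges} ∩ H)) ∪ {s(u, y)}) := by
            rw [Set.disjoint_union_right]
            refine ⟨hdij, ?_⟩
            rw [Set.disjoint_singleton_right]
            intro h2
            exact heU (hUeq ▸ Or.inl h2)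
          have hle := lambda_le hm₂ hmadd hdisj3
          have hnotmem : s(u, y) ∉ (H' \ {a | a ∈ r.edges}) ∪ ({a | a ∈ r.edges} ∩ H) := by
            intro h2
            exact heU (hUeq ▸ Or.inr h2)
          rw [Set.union_singleton, Set.ncard_insert_of_notMem hnotmem (Set.toFinite _)] at hle
          omega
    · -- fl ∈ H' : odd component, mu contradiction
      have hcnt := alt_ncard_00 (S := H) hrp.edges_nodup hrEne haltr.2
        (by rw [hheadr]; exact hgH) (by rw [hlastr]; exact hflH)
      rw [← hCHeq, ← hCH'eq] at hcnt
      have hle := mu_le hm₂ hm₂' hdij (by omega)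
      omega
  · push_neg at hxcov
    by_cases hycov : ∃ g' ∈ H', y ∈ g'
    · obtain ⟨g', hg'H', hyg'⟩ := hycov
      have hg'M : g' ∉ M := fun h' => heH' ((hyM g' h' hyg') ▸ hg'H')
      refine surgery hmax hHm hH'm hdHH' hsumHH' hmuH rfl heM heU heEdge hg'H' hg'M ?_
      rintro h' hh' hne z ⟨hz1, hz2⟩
      rcases Sym2.mem_iff.mp hz1 with rfl | rfl
      · exact hxcov h' hh' hz2
      · exact hne (by
          by_contra hne'
          exact hH'm.2 h' hh' g' hg'H' hne' z ⟨hz2, hyg'⟩)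
    · have hmadd : IsMatchingSet G (H' ∪ {s(u, y)}) := by
        constructor
        · rintro f (hf | hf)
          · exact hH'm.1 hf
          · rw [Set.mem_singleton_iff] at hf
            exact hf ▸ heEdge
        · rintro f hf f' hf' hne z hz
          rcases hf with hf | hf <;> rcases hf' with hf' | hf'
          · exact hH'm.2 f hf f' hf' hne z hz
          · rw [Set.mem_singleton_iff] at hf'
            subst hf'
            rcases Sym2.mem_iff.mp hz.2 with rfl | rfl
            · exact hxcov f hf hz.1
            · exact hycov ⟨f, hf, hz.1⟩
          · rw [Set.mem_singleton_iff] at hf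
            subst hf
            rcases Sym2.mem_iff.mp hz.1 with rfl | rfl
            · exact hxcov f' hf' hz.2
            · exact hycov ⟨f', hf', hz.2⟩
          · rw [Set.mem_singleton_iff] at hf hf'
            exact hne (hf.trans hf'.symm)
      have hdisj3 : Disjoint H (H' ∪ {s(u, y)}) := by
        rw [Set.disjoint_union_right]
        exact ⟨hdHH', by rw [Set.disjoint_singleton_right]; exact heH⟩
      have hle := lambda_le hHm hmadd hdisj3
      rw [Set.union_singleton, Set.ncard_insert_of_notMem heH' (Set.toFinite _)] at hle
      omega


theorem main_head {M H H' : Set (Sym2 V)} (hmax : MaxIntersecting G M H H')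
    {u v : V} {p : G.Walk u v} (hp : IsMaxAltPath G M H p) {e : Sym2 V}
    (he : p.edges.head? = some e) :
    ∃ (a b : V) (q : G.Walk a b), IsMaxAltPath G H H' q ∧ Even q.length ∧
      q.edges.head? = some e := by
  obtain ⟨heM, heH⟩ := first_edge_M hmax hp he
  have heH' : e ∈ H' := first_edge_H' hmax hp he
  have hufree : ∀ φ ∈ H, u ∉ φ := start_H_free hmax hp he heM heH
  have hHm : IsMatchingSet G H := hmax.2.1.1
  have hH'm : IsMatchingSet G H' := hmax.2.1.2.1
  have hdHH' : Disjoint H H' := hmax.2.1.2.2.1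
  have hue : u ∈ e := start_mem_head_edge he
  obtain ⟨t, r, hrmax, hrh, fl, hfl, huniq⟩ := maxrun hHm hH'm hdHH' hufree heH' hue
  have hrp : r.IsPath := hrmax.1.2.1
  have haltr : AltList H H' r.edges := hrmax.1.2.2
  have hrEne : r.edges ≠ [] := fun h => by rw [h] at hrh; simp at hrh
  have hflC : fl ∈ {a | a ∈ r.edges} := mem_of_getLast? hfl
  have hheadr : r.edges.head hrEne = e := head_eq_of_head? hrEne hrh
  have hlastr : r.edges.getLast hrEne = fl := getLast_eq_of_getLast? hrEne hfl
  have hCHeq : {a | a ∈ r.edges} ∩ H = {a | a ∈ r.edges ∧ a ∈ H} := rfl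
  have hCH'eq : {a | a ∈ r.edges} ∩ H' = {a | a ∈ r.edges ∧ a ∉ H} := by
    ext a
    constructor
    · rintro ⟨h1, h2⟩
      exact ⟨h1, Set.disjoint_right.mp hdHH' h2⟩
    · rintro ⟨h1, h2⟩
      rcases haltr.1 a h1 with h' | h'
      · exact absurd h'.1 h2
      · exact ⟨h1, h'.1⟩
  rcases haltr.1 fl hflC with ⟨hflH, hflH'⟩ | ⟨hflH', hflH⟩
  · -- fl ∈ H : even; done
    have hcnt := alt_ncard_01 (S := H) hrp.edges_nodup hrEne haltr.2
      (by rw [hheadr]; exact heH) (by rw [hlastr]; exact hflH)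
    have hsplit : {a | a ∈ r.edges} =
        {a | a ∈ r.edges ∧ a ∈ H} ∪ {a | a ∈ r.edges ∧ a ∉ H} := by
      ext a
      constructor
      · intro ha
        by_cases h2 : a ∈ H
        · exact Or.inl ⟨ha, h2⟩
        · exact Or.inr ⟨ha, h2⟩
      · rintro (ha | ha) <;> exact ha.1
    have hdisj4 : Disjoint {a | a ∈ r.edges ∧ a ∈ H} {a | a ∈ r.edges ∧ a ∉ H} := by
      rw [Set.disjoint_left]
      rintro a ⟨_, h1⟩ ⟨_, h2⟩
      exact h2 h1
    have hlen : r.length = r.edges.length := (Walk.length_edges r).symm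
    have hncl := ncard_mem_list (l := r.edges) hrp.edges_nodup
    have hsum := Set.ncard_union_eq hdisj4 (Set.toFinite _) (Set.toFinite _)
    rw [← hsplit] at hsum
    refine ⟨u, t, r, hrmax, ?_, hrh⟩
    refine ⟨{a | a ∈ r.edges ∧ a ∈ H}.ncard, ?_⟩
    omega
  · -- fl ∈ H' : odd, contradiction via mu
    exfalso
    obtain ⟨hm₂, hm₂', hdij, hUeq, hc2, hc2'⟩ :=
      comp_pair hHm hH'm hdHH' hrp haltr hrh heH' hfl hufree huniq
    have hcnt := alt_ncard_00 (S := H) hrp.edges_nodup hrEne haltr.2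
      (by rw [hheadr]; exact heH) (by rw [hlastr]; exact hflH)
    rw [← hCHeq, ← hCH'eq] at hcnt
    have hsumHH' : H.ncard + H'.ncard = lambdaParam G := hmax.2.1.2.2.2.1
    have hmuH : H.ncard = muParam G := hmax.2.1.2.2.2.2
    have hle := mu_le hm₂ hm₂' hdij (by omega)
    omega

end Stmt14Aux

/-- For maximally intersecting matchings `M`, `H`, `H'` of a finite connected
graph `G`, every end-edge of a maximal `M`-`H` alternating path is an end-edge of a maximal
`H`-`H'` alternating path with an even number of edges. -/
theorem stmt_14 [Fintype V] (G : SimpleGraph V) (hconn : G.Connected)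
    (M H H' : Set (Sym2 V)) (hmax : MaxIntersecting G M H H') :
    ∀ (u v : V) (p : G.Walk u v), IsMaxAltPath G M H p →
      ∀ e : Sym2 V, (p.edges.head? = some e ∨ p.edges.getLast? = some e) →
        ∃ (a b : V) (q : G.Walk a b), IsMaxAltPath G H H' q ∧ Even q.length ∧
          (q.edges.head? = some e ∨ q.edges.getLast? = some e) := by
  intro u v p hp e hend
  rcases hend with hhead | hlast
  · obtain ⟨a, b, q, h1, h2, h3⟩ := Stmt14Aux.main_head hmax hp hhead
    exact ⟨a, b, q, h1, h2, Or.inl h3⟩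
  · have hrev := Stmt14Aux.isMaxAltPath_reverse hp
    have hh : p.reverse.edges.head? = some e := by
      rw [SimpleGraph.Walk.edges_reverse, List.head?_reverse]
      exact hlast
    obtain ⟨a, b, q, h1, h2, h3⟩ := Stmt14Aux.main_head hmax hrev hh
    exact ⟨a, b, q, h1, h2, Or.inl h3⟩
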